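/- Let (E,d) be a metric space such that every subset of E containing at most 4 points admits an isometric embedding into the real line ℝ. Then E itself admits an isometric embedding into ℝ. -/

import Mathlib

/-- If every subset of a metric space `E` with at most four points admits an
isometric embedding into the real line, then `E` itself admits an isometric
embedding into the real line. -/
theorem stmt17 (E : Type*) [MetricSpace E]
    (h : ∀ s : Finset E, s.card ≤ 4 →
      ∃ φ : E → ℝ, ∀ x ∈ s, ∀ y ∈ s, |φ x - φ y| = dist x y) :
    ∃ φ : E → ℝ, Isometry φ := by
  classical
  by_cases hsub : ∀ x y : E, x = y
  · exact ⟨fun _ => 0, Isometry.of_dist_eq fun x y => by rw [hsub x y]; simp⟩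
  push_neg at hsub
  obtain ⟨a, b, hab⟩ := hsub
  have hc0 : dist a b ≠ 0 := dist_ne_zero.mpr hab
  refine ⟨fun x => (dist a b ^ 2 + dist a x ^ 2 - dist b x ^ 2) / (2 * dist a b),
    Isometry.of_dist_eq fun x y => ?_⟩
  obtain ⟨φ, hφ⟩ := h {a, b, x, y} (by
    refine le_trans (Finset.card_insert_le _ _) ?_
    refine le_trans (Nat.add_le_add_right (Finset.card_insert_le _ _) 1) ?_
    refine le_trans (Nat.add_le_add_right (Nat.add_le_add_right (Finset.card_insert_le _ _) 1) 1) ?_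
    simp)
  have ha : a ∈ ({a, b, x, y} : Finset E) := by simp
  have hb : b ∈ ({a, b, x, y} : Finset E) := by simp
  have hx : x ∈ ({a, b, x, y} : Finset E) := by simp
  have hy : y ∈ ({a, b, x, y} : Finset E) := by simp
  have e1 : (φ a - φ b) ^ 2 = dist a b ^ 2 := by rw [← sq_abs, hφ a ha b hb]
  have e2 : (φ a - φ x) ^ 2 = dist a x ^ 2 := by rw [← sq_abs, hφ a ha x hx]
  have e3 : (φ b - φ x) ^ 2 = dist b x ^ 2 := by rw [← sq_abs, hφ b hb x hx]
  have e4 : (φ a - φ y) ^ 2 = dist a y ^ 2 := by rw [← sq_abs, hφ a ha y hy]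
  have e5 : (φ b - φ y) ^ 2 = dist b y ^ 2 := by rw [← sq_abs, hφ b hb y hy]
  have e6 : (φ x - φ y) ^ 2 = dist x y ^ 2 := by rw [← sq_abs, hφ x hx y hy]
  have key : ((dist a b ^ 2 + dist a x ^ 2 - dist b x ^ 2) / (2 * dist a b) -
      (dist a b ^ 2 + dist a y ^ 2 - dist b y ^ 2) / (2 * dist a b)) ^ 2 = dist x y ^ 2 := by
    field_simp
    nlinarith [e1, e2, e3, e4, e5, e6]
  rw [Real.dist_eq, ← Real.sqrt_sq_eq_abs, key, Real.sqrt_sq dist_nonneg]
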